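/- Let G be a graph having a component with at least two cycles, let t(G) be the number of tree components of G, and let Y(G) = { a ∈ E(G) : t(G \ a) > t(G) }. Then an edge e belongs to the core [G] of G if and only if e ∈ E(G) \ Y(G). -/

import Mathlib

open scoped Classical

/-- A finite multigraph: loops and parallel edges allowed. -/
structure Multigraph where
  V : Type
  E : Type
  [fintypeV : Fintype V]
  [fintypeE : Fintype E]
  ends : E → Sym2 V

attribute [instance] Multigraph.fintypeV Multigraph.fintypeE

namespace Multigraph

variable (G : Multigraph)

/-- Vertex support of an edge set: vertices incident to some edge of `X`. -/
noncomputable def supp (X : Finset G.E) : Finset G.V :=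
  Finset.univ.filter (fun v => ∃ e ∈ X, v ∈ G.ends e)

/-- `Δ` of the subgraph induced by the edge set `X`. -/
noncomputable def delta (X : Finset G.E) : ℤ := (X.card : ℤ) - (G.supp X).card

/-- `Δ(G) = |E(G)| - |V(G)|`. -/
noncomputable def deltaG : ℤ := (Fintype.card G.E : ℤ) - (Fintype.card G.V : ℤ)

/-- Degree of `v` in the edge set `X`: loops count twice. -/
noncomputable def degIn (X : Finset G.E) (v : G.V) : ℕ :=
  ∑ e ∈ X, (if G.ends e = s(v, v) then 2 else if v ∈ G.ends e then 1 else 0)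

/-- `u` and `v` are joined by an edge of `X`. -/
def adjIn (X : Finset G.E) (u v : G.V) : Prop := ∃ e ∈ X, G.ends e = s(u, v)

/-- Reachability using only edges of `X`. -/
def reachIn (X : Finset G.E) : G.V → G.V → Prop :=
  Relation.ReflTransGen (G.adjIn X)

/-- The edge set `X` induces a connected subgraph. -/
def ConnSet (X : Finset G.E) : Prop :=
  X.Nonempty ∧ ∀ u ∈ G.supp X, ∀ v ∈ G.supp X, G.reachIn X u v

/-- Edges of the component of the subgraph `(V, X)` containing vertex `v`. -/
noncomputable def compEdges (X : Finset G.E) (v : G.V) : Finset G.E :=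
  X.filter (fun f => ∃ u ∈ G.ends f, G.reachIn X v u)

/-- Vertices of the component of `v` in the graph `(V, X)` (all vertices kept). -/
noncomputable def compVerts (X : Finset G.E) (v : G.V) : Finset G.V :=
  Finset.univ.filter (fun u => G.reachIn X v u)

/-- `C` is (the edge set of) a cycle: connected, every vertex of degree 2. -/
def IsCycleSet (C : Finset G.E) : Prop :=
  G.ConnSet C ∧ ∀ v ∈ G.supp C, G.degIn C v = 2

/-- `T` induces a tree. -/
def IsTreeSet (T : Finset G.E) : Prop := G.ConnSet T ∧ G.delta T = -1

/-- The component of `v` in `(V, X)` is a tree (possibly a single vertex). -/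
def IsTreeCompAt (X : Finset G.E) (v : G.V) : Prop :=
  (G.compEdges X v).card + 1 = (G.compVerts X v).card

/-- The number of tree components of the graph `(V, X)`. -/
noncomputable def treeCount (X : Finset G.E) : ℕ :=
  (((Finset.univ : Finset G.V).filter (fun v => G.IsTreeCompAt X v)).image
    (fun v => G.compVerts X v)).card

/-- The graph `G` has no isolated vertices. -/
def NoIso : Prop := ∀ v : G.V, ∃ e : G.E, v ∈ G.ends e

/-- The graph `G` has no leaves. -/
def NoLeaf : Prop := ∀ v : G.V, G.degIn Finset.univ v ≠ 1

/-- The graph `G` is connected. -/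
def GConn : Prop := Nonempty G.V ∧ ∀ u v : G.V, G.reachIn Finset.univ u v

/-- `G` is a bicycle: connected, leafless, with `Δ(G) = 1`. -/
def IsBicycle : Prop := G.GConn ∧ G.NoLeaf ∧ G.deltaG = 1

/-- One round of deleting all edges incident to a leaf. -/
noncomputable def pruneStep (X : Finset G.E) : Finset G.E :=
  X.filter (fun e => ∀ v ∈ G.ends e, G.degIn X v ≠ 1)

/-- Edge set obtained from `G` by repeatedly deleting leaves until none remain. -/
noncomputable def kernelSet : Finset G.E :=
  G.pruneStep^[Fintype.card G.E] Finset.univ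

/-- `Δ` of the component of `G` containing `v`. -/
noncomputable def compDelta (v : G.V) : ℤ :=
  ((G.compEdges Finset.univ v).card : ℤ) - ((G.compVerts Finset.univ v).card : ℤ)

/-- The core `[G]`: union of the kernels of the components `A` with `Δ(A) ≥ 1`. -/
noncomputable def coreSet : Finset G.E :=
  G.kernelSet.filter (fun e => ∀ v ∈ G.ends e, 1 ≤ G.compDelta v)

/-- `P` is the edge set of an `(x,y)`-path. -/
def IsPathSet (P : Finset G.E) (x y : G.V) : Prop :=
  G.ConnSet P ∧ x ≠ y ∧ x ∈ G.supp P ∧ y ∈ G.supp P ∧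
  G.degIn P x = 1 ∧ G.degIn P y = 1 ∧
  ∀ v ∈ G.supp P, v ≠ x → v ≠ y → G.degIn P v = 2

/-- `C` induces a bicycle subgraph: connected, leafless, `Δ = 1`. -/
def IsBicycleSet (C : Finset G.E) : Prop :=
  G.ConnSet C ∧ (∀ v ∈ G.supp C, G.degIn C v ≠ 1) ∧ G.delta C = 1

/-- Circuits of the `k`-circular matroid `M_k(G)`: minimal nonempty edge sets `C`
with `|C| = |V(G⟨C⟩)| + k`, i.e. `Δ(G⟨C⟩) = k`. -/
def IsCircuitSet (k : ℕ) (C : Finset G.E) : Prop :=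
  (C.Nonempty ∧ G.delta C = (k : ℤ)) ∧
  ∀ D ⊂ C, ¬ (D.Nonempty ∧ G.delta D = (k : ℤ))

/-- Independent sets of `M_k(G)`. -/
def Indep (k : ℕ) (I : Finset G.E) : Prop := ∀ C ⊆ I, ¬ G.IsCircuitSet k C

/-- Bases of `M_k(G)`: maximal independent sets. -/
def IsBase (k : ℕ) (B : Finset G.E) : Prop :=
  G.Indep k B ∧ ∀ B' : Finset G.E, G.Indep k B' → B ⊆ B' → B' = B

/-- The matroid `M_k(G)` is connected: at least two elements and every two
elements lie on a common circuit. -/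
def MConn (k : ℕ) : Prop :=
  2 ≤ Fintype.card G.E ∧
  ∀ a b : G.E, ∃ C : Finset G.E, G.IsCircuitSet k C ∧ a ∈ C ∧ b ∈ C

variable {G}

lemma sym2_rep (z : Sym2 G.V) : ∃ a b, z = s(a, b) :=
  z.ind (fun a b => ⟨a, b, rfl⟩)

lemma adj_symm {X : Finset G.E} {u v : G.V} (h : G.adjIn X u v) : G.adjIn X v u := by
  obtain ⟨e, he, hee⟩ := h
  exact ⟨e, he, hee.trans Sym2.eq_swap⟩

lemma reach_refl {X : Finset G.E} (v : G.V) : G.reachIn X v v := Relation.ReflTransGen.refl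

lemma reach_symm {X : Finset G.E} {u v : G.V} (h : G.reachIn X u v) : G.reachIn X v u :=
  (@Relation.ReflTransGen.stdSymm _ (G.adjIn X) ⟨fun _ _ => adj_symm⟩).symm _ _ h

lemma reach_trans {X : Finset G.E} {u v w : G.V} (h : G.reachIn X u v)
    (h' : G.reachIn X v w) : G.reachIn X u w := Relation.ReflTransGen.trans h h'

lemma reach_mono {X Y : Finset G.E} (hXY : X ⊆ Y) {u v : G.V} (h : G.reachIn X u v) :
    G.reachIn Y u v := by
  induction h with
  | refl => exact reach_refl _
  | tail _ hadj ih =>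
      obtain ⟨e, he, hee⟩ := hadj
      exact ih.tail ⟨e, hXY he, hee⟩

lemma mem_compVerts {X : Finset G.E} {v u : G.V} :
    u ∈ G.compVerts X v ↔ G.reachIn X v u := by
  simp [compVerts]

lemma self_mem_compVerts {X : Finset G.E} (v : G.V) : v ∈ G.compVerts X v :=
  mem_compVerts.2 (reach_refl v)

lemma mem_compEdges {X : Finset G.E} {v : G.V} {f : G.E} :
    f ∈ G.compEdges X v ↔ f ∈ X ∧ ∃ u ∈ G.ends f, G.reachIn X v u := by
  simp [compEdges]

/-- An edge adjacent between its two endpoints. -/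
lemma adj_of_mem {X : Finset G.E} {f : G.E} (hf : f ∈ X) {a b : G.V}
    (hab : G.ends f = s(a, b)) : G.adjIn X a b := ⟨f, hf, hab⟩

/-- Both endpoints of a component edge are reachable. -/
lemma reach_of_mem_compEdges {X : Finset G.E} {v : G.V} {f : G.E}
    (hf : f ∈ G.compEdges X v) {w : G.V} (hw : w ∈ G.ends f) : G.reachIn X v w := by
  rw [mem_compEdges] at hf
  obtain ⟨hfX, u, hu, hru⟩ := hf
  obtain ⟨a, b, hab⟩ := sym2_rep (G.ends f)
  rw [hab, Sym2.mem_iff] at hu hw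
  have hadj : G.adjIn X a b := ⟨f, hfX, hab⟩
  rcases hu with rfl | rfl <;> rcases hw with rfl | rfl
  · exact hru
  · exact hru.tail hadj
  · exact hru.tail (adj_symm hadj)
  · exact hru

lemma compVerts_eq_of_reach {X : Finset G.E} {v w : G.V} (h : G.reachIn X v w) :
    G.compVerts X v = G.compVerts X w := by
  ext u
  simp only [mem_compVerts]
  exact ⟨fun hu => reach_trans (reach_symm h) hu, fun hu => reach_trans h hu⟩

lemma compEdges_eq_of_reach {X : Finset G.E} {v w : G.V} (h : G.reachIn X v w) :
    G.compEdges X v = G.compEdges X w := by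
  ext f
  simp only [mem_compEdges]
  constructor
  · rintro ⟨hf, u, hu, hr⟩; exact ⟨hf, u, hu, reach_trans (reach_symm h) hr⟩
  · rintro ⟨hf, u, hu, hr⟩; exact ⟨hf, u, hu, reach_trans h hr⟩

lemma mem_supp {X : Finset G.E} {v : G.V} :
    v ∈ G.supp X ↔ ∃ e ∈ X, v ∈ G.ends e := by simp [supp]


/-- Crossing edge: a reach chain from inside S to outside S crosses. -/
lemma exists_crossing {X : Finset G.E} {S : Finset G.V} {s u : G.V}
    (hs : s ∈ S) (hu : u ∉ S) (h : G.reachIn X s u) :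
    ∃ f ∈ X, ∃ a ∈ S, ∃ b ∉ S, G.ends f = s(a, b) := by
  induction h with
  | refl => exact absurd hs hu
  | @tail b c hb hadj ih =>
      by_cases hbS : b ∈ S
      · obtain ⟨f, hf, hfe⟩ := hadj
        exact ⟨f, hf, b, hbS, c, hu, hfe⟩
      · exact ih hbS

/-- Key growth lemma. -/
lemma grow (X : Finset G.E) (v : G.V) :
    ∀ (n : ℕ) (S : Finset G.V) (Y : Finset G.E),
      ((G.compVerts X v) \ S).card ≤ n →
      S.Nonempty → S ⊆ G.compVerts X v → Y ⊆ G.compEdges X v →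
      (∀ f ∈ Y, ∀ w ∈ G.ends f, w ∈ S) →
      (G.compVerts X v).card + Y.card ≤ (G.compEdges X v).card + S.card := by
  intro n
  induction n with
  | zero =>
      intro S Y hn hSne hSsub hYsub hYends
      have hSall : G.compVerts X v ⊆ S := by
        intro w hw
        by_contra hwS
        have : w ∈ (G.compVerts X v) \ S := Finset.mem_sdiff.2 ⟨hw, hwS⟩
        have := Finset.card_pos.2 ⟨w, this⟩
        omega
      have h1 : (G.compVerts X v).card ≤ S.card := Finset.card_le_card hSall
      have h2 : Y.card ≤ (G.compEdges X v).card := Finset.card_le_card hYsub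
      omega
  | succ n ih =>
      intro S Y hn hSne hSsub hYsub hYends
      by_cases hSall : G.compVerts X v ⊆ S
      · have h1 : (G.compVerts X v).card ≤ S.card := Finset.card_le_card hSall
        have h2 : Y.card ≤ (G.compEdges X v).card := Finset.card_le_card hYsub
        omega
      · obtain ⟨u, hu, huS⟩ := Finset.not_subset.1 hSall
        obtain ⟨s, hsS⟩ := hSne
        have hsv : G.reachIn X s u :=
          reach_trans (reach_symm (mem_compVerts.1 (hSsub hsS))) (mem_compVerts.1 hu)
        obtain ⟨f, hfX, a, haS, b, hbS, hfe⟩ := exists_crossing hsS huS hsv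
        have hra : G.reachIn X v a := mem_compVerts.1 (hSsub haS)
        have hrb : G.reachIn X v b := hra.tail ⟨f, hfX, hfe⟩
        have hbC : b ∈ G.compVerts X v := mem_compVerts.2 hrb
        have hfC : f ∈ G.compEdges X v :=
          mem_compEdges.2 ⟨hfX, a, by rw [hfe]; exact Sym2.mem_mk_left _ _, hra⟩
        have hfY : f ∉ Y := fun hfY =>
          hbS (hYends f hfY b (by rw [hfe]; exact Sym2.mem_mk_right _ _))
        have hmeas : ((G.compVerts X v) \ insert b S).card ≤ n := by
          have hsub : (G.compVerts X v) \ insert b S ⊆ ((G.compVerts X v) \ S).erase b := by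
            intro w hw
            rw [Finset.mem_sdiff, Finset.mem_insert] at hw
            push_neg at hw
            exact Finset.mem_erase.2 ⟨hw.2.1, Finset.mem_sdiff.2 ⟨hw.1, hw.2.2⟩⟩
          have hbmem : b ∈ (G.compVerts X v) \ S := Finset.mem_sdiff.2 ⟨hbC, hbS⟩
          have := Finset.card_le_card hsub
          rw [Finset.card_erase_of_mem hbmem] at this
          omega
        have := ih (insert b S) (insert f Y) hmeas ⟨b, Finset.mem_insert_self _ _⟩
          (Finset.insert_subset hbC hSsub) (Finset.insert_subset hfC hYsub)
          (by
            intro g hg w hw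
            rcases Finset.mem_insert.1 hg with rfl | hg
            · rw [hfe, Sym2.mem_iff] at hw
              rcases hw with rfl | rfl
              · exact Finset.mem_insert_of_mem haS
              · exact Finset.mem_insert_self _ _
            · exact Finset.mem_insert_of_mem (hYends g hg w hw))
        rw [Finset.card_insert_of_notMem hfY, Finset.card_insert_of_notMem hbS] at this
        omega

/-- `|compVerts| ≤ |compEdges| + 1`. -/
lemma card_compVerts_le (X : Finset G.E) (v : G.V) :
    (G.compVerts X v).card ≤ (G.compEdges X v).card + 1 := by
  have := grow X v ((G.compVerts X v) \ {v}).card {v} ∅ le_rfl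
    ⟨v, Finset.mem_singleton_self v⟩
    (Finset.singleton_subset_iff.2 (self_mem_compVerts v))
    (Finset.empty_subset _) (by simp)
  simpa using this


/-- weight of an edge at a vertex -/
noncomputable def wt (G : Multigraph) (e : G.E) (v : G.V) : ℕ :=
  if G.ends e = s(v, v) then 2 else if v ∈ G.ends e then 1 else 0

lemma degIn_eq_sum_wt (X : Finset G.E) (v : G.V) :
    G.degIn X v = ∑ e ∈ X, G.wt e v := rfl

lemma wt_pos {e : G.E} {v : G.V} (hv : v ∈ G.ends e) : 1 ≤ G.wt e v := by
  unfold wt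
  split_ifs <;> omega

lemma wt_eq_zero {e : G.E} {v : G.V} (hv : v ∉ G.ends e) : G.wt e v = 0 := by
  unfold wt
  have : ¬ G.ends e = s(v, v) := by
    intro h; exact hv (by rw [h]; exact Sym2.mem_mk_left _ _)
  simp [this, hv]

lemma sum_wt (e : G.E) : ∑ v ∈ Finset.univ, G.wt e v = 2 := by
  obtain ⟨a, b, hab⟩ := sym2_rep (G.ends e)
  by_cases hba : a = b
  · subst hba
    rw [Finset.sum_eq_single a]
    · unfold wt; rw [hab]; simp
    · intro v _ hva
      apply wt_eq_zero
      rw [hab, Sym2.mem_iff]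
      push_neg
      exact ⟨fun h => hva h, fun h => hva h⟩
    · simp
  · have h2 : ({a, b} : Finset G.V).card = 2 := by
      rw [Finset.card_insert_of_notMem (by simpa using hba), Finset.card_singleton]
    rw [← Finset.sum_subset (Finset.subset_univ ({a, b} : Finset G.V))]
    · have ha : G.wt e a = 1 := by
        unfold wt
        rw [hab]
        rw [if_neg, if_pos (Sym2.mem_mk_left _ _)]
        intro h
        rw [Sym2.eq_iff] at h
        simp [Prod.ext_iff] at h
        exact hba h.symm
      have hb : G.wt e b = 1 := by
        unfold wt
        rw [hab]
        rw [if_neg, if_pos (Sym2.mem_mk_right _ _)]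
        intro h
        rw [Sym2.eq_iff] at h
        simp [Prod.ext_iff] at h
        exact hba h
      rw [Finset.sum_pair hba, ha, hb]
    · intro v _ hv
      apply wt_eq_zero
      rw [hab, Sym2.mem_iff]
      simpa using hv

/-- Handshake. -/
lemma handshake (Y : Finset G.E) : ∑ v ∈ Finset.univ, G.degIn Y v = 2 * Y.card := by
  simp only [degIn_eq_sum_wt]
  rw [Finset.sum_comm]
  rw [Finset.sum_congr rfl (fun e _ => sum_wt e)]
  rw [Finset.sum_const, smul_eq_mul, mul_comm]

lemma degIn_pos {Y : Finset G.E} {e : G.E} {v : G.V} (he : e ∈ Y) (hv : v ∈ G.ends e) :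
    1 ≤ G.degIn Y v := by
  rw [degIn_eq_sum_wt]
  calc 1 ≤ G.wt e v := wt_pos hv
  _ ≤ _ := Finset.single_le_sum (f := fun e => G.wt e v) (fun _ _ => Nat.zero_le _) he

lemma degIn_mono {Y Z : Finset G.E} (h : Y ⊆ Z) (v : G.V) : G.degIn Y v ≤ G.degIn Z v := by
  rw [degIn_eq_sum_wt, degIn_eq_sum_wt]
  exact Finset.sum_le_sum_of_subset h

lemma degIn_erase (Y : Finset G.E) (e : G.E) (he : e ∈ Y) (v : G.V) :
    G.degIn (Y.erase e) v + G.wt e v = G.degIn Y v := by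
  rw [degIn_eq_sum_wt, degIn_eq_sum_wt]
  exact Finset.sum_erase_add _ _ he

lemma degIn_eq_zero_of_not_mem_supp {Y : Finset G.E} {v : G.V} (h : v ∉ G.supp Y) :
    G.degIn Y v = 0 := by
  rw [degIn_eq_sum_wt]
  apply Finset.sum_eq_zero
  intro e he
  exact wt_eq_zero (fun hv => h (mem_supp.2 ⟨e, he, hv⟩))

/-- If every vertex of `supp Y` except possibly `u` has degree ≥ 2, and `u`'s degree ≥ 1
with `u ∈ supp Y`, then `|supp Y| ≤ |Y|`. -/
lemma card_supp_le_card {Y : Finset G.E} {u : G.V} (hu : u ∈ G.supp Y)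
    (hdeg : ∀ w ∈ G.supp Y, w ≠ u → 2 ≤ G.degIn Y w) :
    (G.supp Y).card ≤ Y.card := by
  have hsum : ∑ v ∈ G.supp Y, G.degIn Y v = 2 * Y.card := by
    rw [← handshake]
    symm
    rw [← Finset.sum_subset (Finset.subset_univ (G.supp Y))
      (fun v _ hv => degIn_eq_zero_of_not_mem_supp hv)]
  have hlow : 2 * (G.supp Y).card - 1 ≤ ∑ v ∈ G.supp Y, G.degIn Y v := by
    have h1 : ∑ v ∈ (G.supp Y).erase u, G.degIn Y v ≥ 2 * ((G.supp Y).card - 1) := by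
      calc 2 * ((G.supp Y).card - 1) = ∑ _v ∈ (G.supp Y).erase u, 2 := by
            rw [Finset.sum_const, Finset.card_erase_of_mem hu, smul_eq_mul, mul_comm]
      _ ≤ _ := Finset.sum_le_sum (fun w hw => by
            rw [Finset.mem_erase] at hw
            exact hdeg w hw.2 hw.1)
    have h2 : 1 ≤ G.degIn Y u := by
      obtain ⟨e, he, hve⟩ := mem_supp.1 hu
      exact degIn_pos he hve
    have h3 := Finset.sum_erase_add (G.supp Y) (G.degIn Y) hu
    have hc : 1 ≤ (G.supp Y).card := Finset.card_pos.2 ⟨u, hu⟩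
    omega
  have hc : 1 ≤ (G.supp Y).card := Finset.card_pos.2 ⟨u, hu⟩
  omega


lemma pruneStep_subset (X : Finset G.E) : G.pruneStep X ⊆ X := Finset.filter_subset _ _

/-- Leafless edge sets survive pruning. -/
def LeaflessSet (G : Multigraph) (Y : Finset G.E) : Prop :=
  ∀ f ∈ Y, ∀ v ∈ G.ends f, G.degIn Y v ≠ 1

lemma leafless_deg_two {Y : Finset G.E} (hY : G.LeaflessSet Y) {f : G.E} (hf : f ∈ Y)
    {v : G.V} (hv : v ∈ G.ends f) : 2 ≤ G.degIn Y v := by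
  have h1 := degIn_pos hf hv
  have h2 := hY f hf v hv
  omega

lemma leafless_subset_pruneStep {Y X : Finset G.E} (hY : G.LeaflessSet Y) (hYX : Y ⊆ X) :
    Y ⊆ G.pruneStep X := by
  intro f hf
  refine Finset.mem_filter.2 ⟨hYX hf, fun v hv h1 => ?_⟩
  have := (leafless_deg_two hY hf hv).trans (degIn_mono hYX v)
  omega

lemma leafless_subset_kernel {Y : Finset G.E} (hY : G.LeaflessSet Y) : Y ⊆ G.kernelSet := by
  have : ∀ n, Y ⊆ G.pruneStep^[n] Finset.univ := by
    intro n
    induction n with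
    | zero => simp
    | succ n ih =>
        rw [Function.iterate_succ_apply']
        exact leafless_subset_pruneStep hY ih
  exact this _

lemma iterate_fixed_of_eq {f : Finset G.E → Finset G.E} {S : Finset G.E} {n : ℕ}
    (h : f^[n + 1] S = f^[n] S) : ∀ m, n ≤ m → f^[m] S = f^[n] S := by
  intro m hm
  induction m with
  | zero => simp_all
  | succ m ih =>
      rcases Nat.lt_or_ge n (m + 1) with hlt | hge
      · have hnm : n ≤ m := by omega
        calc f^[m+1] S = f (f^[m] S) := Function.iterate_succ_apply' f m S
          _ = f (f^[n] S) := by rw [ih hnm]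
          _ = f^[n+1] S := (Function.iterate_succ_apply' f n S).symm
          _ = f^[n] S := h
      · have : n = m + 1 := by omega
        rw [this]

lemma fix_of_card {f : Finset G.E → Finset G.E} (hsub : ∀ X, f X ⊆ X) (hemp : f ∅ = ∅)
    {N : ℕ} (hN : Fintype.card G.E ≤ N) : f (f^[N] Finset.univ) = f^[N] Finset.univ := by
  by_cases h : ∃ n < N, f^[n + 1] Finset.univ = f^[n] Finset.univ
  · obtain ⟨n, hn, hfix⟩ := h
    have h1 := iterate_fixed_of_eq hfix N (by omega)
    calc f (f^[N] Finset.univ) = f (f^[n] Finset.univ) := by rw [h1]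
      _ = f^[n+1] Finset.univ := (Function.iterate_succ_apply' f n Finset.univ).symm
      _ = f^[n] Finset.univ := hfix
      _ = f^[N] Finset.univ := h1.symm
  · push_neg at h
    have hcard : ∀ n ≤ N, (f^[n] Finset.univ).card + n ≤ N := by
      intro n hn
      induction n with
      | zero => simpa using hN
      | succ n ih =>
          have hlt : (f^[n+1] Finset.univ).card < (f^[n] Finset.univ).card := by
            apply Finset.card_lt_card
            rw [Function.iterate_succ_apply']
            exact lt_of_le_of_ne (hsub _)
              (by
                intro hEq
                exact h n (by omega) (by rw [Function.iterate_succ_apply', hEq]))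
          have := ih (by omega)
          omega
    have h0 : (f^[N] Finset.univ).card = 0 := by
      have := hcard N le_rfl
      omega
    have he : f^[N] Finset.univ = (∅ : Finset G.E) := Finset.card_eq_zero.1 h0
    rw [he, hemp]

lemma kernel_fixed : G.pruneStep G.kernelSet = G.kernelSet := by
  apply fix_of_card pruneStep_subset _ le_rfl
  unfold pruneStep
  simp

lemma kernel_leafless : G.LeaflessSet G.kernelSet := by
  intro f hf v hv
  have := kernel_fixed (G := G)
  rw [← this] at hf
  exact (Finset.mem_filter.1 hf).2 v hv


/-! Transfer lemmas for edge deletion. -/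

section Transfer

variable {X : Finset G.E} {e : G.E} {v : G.V}

/-- T1: if no endpoint of `e` is `X∖e`-reachable from `v`, reachability is unchanged. -/
lemma reach_erase_of_avoid (hav : ∀ u ∈ G.ends e, ¬ G.reachIn (X.erase e) v u)
    {w : G.V} (h : G.reachIn X v w) : G.reachIn (X.erase e) v w := by
  induction h with
  | refl => exact reach_refl _
  | @tail b c hb hadj ih =>
      obtain ⟨f, hf, hfe⟩ := hadj
      by_cases hfe' : f = e
      · subst hfe'
        exact absurd ih (hav b (by rw [hfe]; exact Sym2.mem_mk_left _ _))
      · exact ih.tail ⟨f, Finset.mem_erase.2 ⟨hfe', hf⟩, hfe⟩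

lemma compVerts_erase_of_avoid (hav : ∀ u ∈ G.ends e, ¬ G.reachIn (X.erase e) v u) :
    G.compVerts (X.erase e) v = G.compVerts X v := by
  ext w
  simp only [mem_compVerts]
  exact ⟨reach_mono (Finset.erase_subset _ _), reach_erase_of_avoid hav⟩

lemma compEdges_erase_of_avoid (hav : ∀ u ∈ G.ends e, ¬ G.reachIn (X.erase e) v u) :
    G.compEdges (X.erase e) v = G.compEdges X v := by
  ext f
  simp only [mem_compEdges]
  constructor
  · rintro ⟨hf, u, hu, hr⟩
    exact ⟨Finset.mem_of_mem_erase hf, u, hu, reach_mono (Finset.erase_subset _ _) hr⟩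
  · rintro ⟨hf, u, hu, hr⟩
    have hfe : f ≠ e := by
      rintro rfl
      exact hav u hu (reach_erase_of_avoid hav hr)
    exact ⟨Finset.mem_erase.2 ⟨hfe, hf⟩, u, hu, reach_erase_of_avoid hav hr⟩

/-- T3: reach-split along a deleted edge. -/
lemma reach_split {u₁ u₂ : G.V} (he : G.ends e = s(u₁, u₂)) {a b : G.V}
    (h : G.reachIn X a b) :
    G.reachIn (X.erase e) a b ∨ G.reachIn (X.erase e) u₁ b ∨ G.reachIn (X.erase e) u₂ b := by
  induction h with
  | refl => exact Or.inl (reach_refl _)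
  | @tail b c hb hadj ih =>
      obtain ⟨f, hf, hfe⟩ := hadj
      by_cases hfe' : f = e
      · subst hfe'
        have : c ∈ G.ends f := by rw [hfe]; exact Sym2.mem_mk_right _ _
        rw [he, Sym2.mem_iff] at this
        rcases this with rfl | rfl
        · exact Or.inr (Or.inl (reach_refl _))
        · exact Or.inr (Or.inr (reach_refl _))
      · have hstep : G.adjIn (X.erase e) b c := ⟨f, Finset.mem_erase.2 ⟨hfe', hf⟩, hfe⟩
        rcases ih with h | h | h
        · exact Or.inl (h.tail hstep)
        · exact Or.inr (Or.inl (h.tail hstep))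
        · exact Or.inr (Or.inr (h.tail hstep))

/-- T2: if the endpoints stay connected, reachability from an endpoint is unchanged. -/
lemma reach_erase_of_conn {u₁ u₂ : G.V} (he : G.ends e = s(u₁, u₂))
    (hc : G.reachIn (X.erase e) u₁ u₂) {w : G.V} (h : G.reachIn X u₁ w) :
    G.reachIn (X.erase e) u₁ w := by
  rcases reach_split he h with h | h | h
  · exact h
  · exact h
  · exact hc.trans h

lemma compVerts_erase_of_conn {u₁ u₂ : G.V} (he : G.ends e = s(u₁, u₂))
    (hc : G.reachIn (X.erase e) u₁ u₂) :
    G.compVerts (X.erase e) u₁ = G.compVerts X u₁ := by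
  ext w
  simp only [mem_compVerts]
  exact ⟨reach_mono (Finset.erase_subset _ _), reach_erase_of_conn he hc⟩

lemma compEdges_erase_of_conn {u₁ u₂ : G.V} (he : G.ends e = s(u₁, u₂))
    (hc : G.reachIn (X.erase e) u₁ u₂) :
    G.compEdges (X.erase e) u₁ = (G.compEdges X u₁).erase e := by
  ext f
  simp only [mem_compEdges, Finset.mem_erase]
  constructor
  · rintro ⟨⟨hfe, hfX⟩, u, hu, hr⟩
    exact ⟨hfe, hfX, u, hu, reach_mono (Finset.erase_subset _ _) hr⟩
  · rintro ⟨hfe, hfX, u, hu, hr⟩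
    exact ⟨⟨hfe, hfX⟩, u, hu, reach_erase_of_conn he hc hr⟩

/-- Partition: if `e ∈ X` is a bridge, the old component splits into the two new ones. -/
lemma bridge_partition {u₁ u₂ : G.V} (he : G.ends e = s(u₁, u₂)) (heX : e ∈ X)
    (hnc : ¬ G.reachIn (X.erase e) u₁ u₂) :
    G.compVerts X u₁ = G.compVerts (X.erase e) u₁ ∪ G.compVerts (X.erase e) u₂ ∧
    Disjoint (G.compVerts (X.erase e) u₁) (G.compVerts (X.erase e) u₂) ∧
    G.compEdges X u₁ = insert e (G.compEdges (X.erase e) u₁ ∪ G.compEdges (X.erase e) u₂) ∧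
    Disjoint (G.compEdges (X.erase e) u₁) (G.compEdges (X.erase e) u₂) ∧
    e ∉ G.compEdges (X.erase e) u₁ ∪ G.compEdges (X.erase e) u₂ := by
  have hadj : G.adjIn X u₁ u₂ := ⟨e, heX, he⟩
  have h12 : G.reachIn X u₁ u₂ := Relation.ReflTransGen.single hadj
  refine ⟨?_, ?_, ?_, ?_, ?_⟩
  · ext w
    simp only [mem_compVerts, Finset.mem_union]
    constructor
    · intro h
      rcases reach_split he h with h | h | h
      · exact Or.inl h
      · exact Or.inl h
      · exact Or.inr h
    · rintro (h | h)
      · exact reach_mono (Finset.erase_subset _ _) h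
      · exact h12.trans (reach_mono (Finset.erase_subset _ _) h)
  · rw [Finset.disjoint_left]
    intro w hw1 hw2
    exact hnc ((mem_compVerts.1 hw1).trans (reach_symm (mem_compVerts.1 hw2)))
  · ext f
    simp only [mem_compEdges, Finset.mem_insert, Finset.mem_union]
    constructor
    · rintro ⟨hf, u, hu, hr⟩
      by_cases hfe : f = e
      · exact Or.inl hfe
      · refine Or.inr ?_
        rcases reach_split he hr with h | h | h
        · exact Or.inl ⟨Finset.mem_erase.2 ⟨hfe, hf⟩, u, hu, h⟩
        · exact Or.inl ⟨Finset.mem_erase.2 ⟨hfe, hf⟩, u, hu, h⟩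
        · exact Or.inr ⟨Finset.mem_erase.2 ⟨hfe, hf⟩, u, hu, h⟩
    · rintro (rfl | ⟨hf, u, hu, hr⟩ | ⟨hf, u, hu, hr⟩)
      · exact ⟨heX, u₁, by rw [he]; exact Sym2.mem_mk_left _ _, reach_refl _⟩
      · exact ⟨Finset.mem_of_mem_erase hf, u, hu, reach_mono (Finset.erase_subset _ _) hr⟩
      · exact ⟨Finset.mem_of_mem_erase hf, u, hu,
          h12.trans (reach_mono (Finset.erase_subset _ _) hr)⟩
  · rw [Finset.disjoint_left]
    intro f hf1 hf2
    rw [mem_compEdges] at hf1 hf2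
    obtain ⟨hfX, u, hu, hr1⟩ := hf1
    have hr2 : G.reachIn (X.erase e) u₂ u := reach_of_mem_compEdges (mem_compEdges.2 hf2) hu
    exact hnc (hr1.trans (reach_symm hr2))
  · intro hf
    rw [Finset.mem_union, mem_compEdges, mem_compEdges] at hf
    rcases hf with ⟨hf, _⟩ | ⟨hf, _⟩ <;> exact (Finset.notMem_erase _ _) hf

end Transfer


section Pendant

variable {W : Finset G.E} {g : G.E} {u v w₀ : G.V}

/-- If `v` has no incident edge in `Z`, its component is a trivial tree. -/
lemma isTreeCompAt_isolated {Z : Finset G.E} {v : G.V} (h : ∀ f ∈ Z, v ∉ G.ends f) :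
    G.IsTreeCompAt Z v := by
  have hV : G.compVerts Z v = {v} := by
    ext w
    rw [mem_compVerts, Finset.mem_singleton]
    constructor
    · intro hr
      rcases Relation.ReflTransGen.cases_head hr with rfl | ⟨c, hadj, _⟩
      · rfl
      · obtain ⟨f, hf, hfe⟩ := hadj
        exact absurd (by rw [hfe]; exact Sym2.mem_mk_left _ _) (h f hf)
    · rintro rfl; exact reach_refl _
  have hE : G.compEdges Z v = ∅ := by
    rw [Finset.eq_empty_iff_forall_notMem]
    intro f hf
    have hfZ := (mem_compEdges.1 hf).1
    obtain ⟨x, hx, hr⟩ := (mem_compEdges.1 hf).2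
    have : x ∈ G.compVerts Z v := mem_compVerts.2 hr
    rw [hV, Finset.mem_singleton] at this
    subst this
    exact h f hfZ hx
  unfold IsTreeCompAt
  rw [hV, hE]
  simp

/- Pendant vertex hypotheses: `g` is the only `W`-edge at `v`, with other endpoint `w₀`. -/
variable (huv : u ≠ v) (hg : G.ends g = s(v, w₀)) (hvw : v ≠ w₀)
  (honly : ∀ f ∈ W, v ∈ G.ends f → f = g)

include huv honly in
lemma pendant_not_reach {w : G.V} (h : G.reachIn (W.erase g) u w) : w ≠ v := by
  rintro rfl
  rcases Relation.ReflTransGen.cases_tail h with rfl | ⟨b, _, hadj⟩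
  · exact huv rfl
  · obtain ⟨f, hf, hfe⟩ := hadj
    obtain ⟨hfg, hfW⟩ := Finset.mem_erase.1 hf
    exact hfg (honly f hfW (by rw [hfe]; exact Sym2.mem_mk_right _ _))

include huv hg honly in
lemma pendant_reach {w : G.V} (h : G.reachIn W u w) :
    G.reachIn (W.erase g) u w ∨ (w = v ∧ G.reachIn (W.erase g) u w₀) := by
  induction h with
  | refl => exact Or.inl (reach_refl _)
  | @tail b c hb hadj ih =>
      obtain ⟨f, hf, hfe⟩ := hadj
      by_cases hfg : f = g
      · subst hfg
        rw [hg] at hfe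
        rw [Sym2.eq_iff] at hfe
        rcases ih with hbr | ⟨rfl, hr0⟩
        · rcases hfe with ⟨rfl, rfl⟩ | ⟨rfl, rfl⟩
          · exact absurd rfl (pendant_not_reach huv honly hbr)
          · exact Or.inr ⟨rfl, hbr⟩
        · rcases hfe with ⟨h1, rfl⟩ | ⟨rfl, h2⟩
          · exact Or.inl hr0
          · exact Or.inr ⟨rfl, hr0⟩
      · have hstep : G.adjIn (W.erase g) b c := ⟨f, Finset.mem_erase.2 ⟨hfg, hf⟩, hfe⟩
        rcases ih with hbr | ⟨rfl, hr0⟩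
        · exact Or.inl (hbr.tail hstep)
        · obtain ⟨hfg', _⟩ := Finset.mem_erase.1 hstep.choose_spec.1
          exact absurd (honly f hf (by rw [hfe]; exact Sym2.mem_mk_left _ _)) hfg

include huv hg honly in
lemma pendant_compVerts : G.compVerts (W.erase g) u = (G.compVerts W u).erase v := by
  ext w
  rw [mem_compVerts, Finset.mem_erase, mem_compVerts]
  constructor
  · intro h
    exact ⟨pendant_not_reach huv honly h, reach_mono (Finset.erase_subset _ _) h⟩
  · rintro ⟨hwv, hr⟩
    rcases pendant_reach huv hg honly hr with h | ⟨rfl, _⟩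
    · exact h
    · exact absurd rfl hwv

include huv hg honly in
lemma pendant_compEdges : G.compEdges (W.erase g) u = (G.compEdges W u).erase g := by
  ext f
  simp only [mem_compEdges, Finset.mem_erase]
  constructor
  · rintro ⟨⟨hfg, hfW⟩, x, hx, hr⟩
    exact ⟨hfg, hfW, x, hx, reach_mono (Finset.erase_subset _ _) hr⟩
  · rintro ⟨hfg, hfW, x, hx, hr⟩
    refine ⟨⟨hfg, hfW⟩, ?_⟩
    have hxv : x ≠ v := by
      rintro rfl
      exact hfg (honly f hfW hx)
    rcases pendant_reach huv hg honly hr with h | ⟨rfl, _⟩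
    · exact ⟨x, hx, h⟩
    · exact absurd rfl hxv

end Pendant


lemma not_treeCompAt_iff {X : Finset G.E} {u : G.V} :
    ¬ G.IsTreeCompAt X u ↔ (G.compVerts X u).card ≤ (G.compEdges X u).card := by
  have h := card_compVerts_le X u
  unfold IsTreeCompAt
  omega

/-- If both sides of `e` in `Z ∖ e` fail to be trees, `e` lies in a leafless subgraph. -/
lemma exists_leafless :
    ∀ (n : ℕ) (Z : Finset G.E), Z.card ≤ n → ∀ e ∈ Z,
      (∀ u ∈ G.ends e, ¬ G.IsTreeCompAt (Z.erase e) u) →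
      ∃ Y : Finset G.E, e ∈ Y ∧ G.LeaflessSet Y := by
  intro n
  induction n with
  | zero =>
      intro Z hZ e he _
      have := Finset.card_pos.2 ⟨e, he⟩
      omega
  | succ n ih =>
      intro Z hZcard e he h1
      by_cases hZ : G.LeaflessSet Z
      · exact ⟨Z, he, hZ⟩
      · unfold LeaflessSet at hZ
        push_neg at hZ
        obtain ⟨g, hgZ, v, hvg, hdeg1⟩ := hZ
        have hwt1 : G.wt g v = 1 := by
          have hle : G.wt g v ≤ G.degIn Z v := by
            rw [degIn_eq_sum_wt]
            exact Finset.single_le_sum (f := fun f => G.wt f v) (fun _ _ => Nat.zero_le _) hgZ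
          have := wt_pos (G := G) hvg
          omega
        have hnl : ¬ G.ends g = s(v, v) := by
          intro h
          unfold wt at hwt1
          rw [if_pos h] at hwt1
          omega
        obtain ⟨w₀, hg, hvw⟩ : ∃ w₀, G.ends g = s(v, w₀) ∧ v ≠ w₀ := by
          obtain ⟨a, b, hab⟩ := sym2_rep (G.ends g)
          rw [hab, Sym2.mem_iff] at hvg
          rcases hvg with rfl | rfl
          · refine ⟨b, hab, ?_⟩
            rintro rfl
            exact hnl hab
          · refine ⟨a, hab.trans Sym2.eq_swap, ?_⟩
            rintro rfl
            exact hnl (hab.trans Sym2.eq_swap)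
        have honlyZ : ∀ f ∈ Z, v ∈ G.ends f → f = g := by
          intro f hf hvf
          by_contra hfg
          have h0 : G.degIn (Z.erase g) v = 0 := by
            have := degIn_erase Z g hgZ v
            omega
          have := degIn_pos (Finset.mem_erase.2 ⟨hfg, hf⟩) hvf
          omega
        by_cases hge : g = e
        · subst hge
          refine absurd (isTreeCompAt_isolated (fun f hf hvf => ?_)) (h1 v hvg)
          obtain ⟨hfg, hfZ⟩ := Finset.mem_erase.1 hf
          exact hfg (honlyZ f hfZ hvf)
        · have heZ' : e ∈ Z.erase g := Finset.mem_erase.2 ⟨fun h => hge h.symm, he⟩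
          have hcard' : (Z.erase g).card ≤ n := by
            rw [Finset.card_erase_of_mem hgZ]
            have := Finset.card_pos.2 ⟨g, hgZ⟩
            omega
          refine ih (Z.erase g) hcard' e heZ' ?_
          intro u hu
          have hve : v ∉ G.ends e := by
            intro hv
            exact hge (honlyZ e he hv).symm
          have huv : u ≠ v := fun h => hve (h ▸ hu)
          set W := Z.erase e with hW
          have hgW : g ∈ W := Finset.mem_erase.2 ⟨hge, hgZ⟩
          have honlyW : ∀ f ∈ W, v ∈ G.ends f → f = g := fun f hf =>
            honlyZ f (Finset.mem_of_mem_erase hf)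
          have hcomm : (Z.erase g).erase e = W.erase g := by
            rw [hW]; ext f; simp only [Finset.mem_erase]; tauto
          rw [hcomm]
          have hnt : (G.compVerts W u).card ≤ (G.compEdges W u).card :=
            not_treeCompAt_iff.1 (h1 u hu)
          by_cases hgC : g ∈ G.compEdges W u
          · have hvC : v ∈ G.compVerts W u :=
              mem_compVerts.2 (reach_of_mem_compEdges hgC (by rw [hg]; exact Sym2.mem_mk_left _ _))
            rw [not_treeCompAt_iff, pendant_compVerts huv hg honlyW,
              pendant_compEdges huv hg honlyW, Finset.card_erase_of_mem hvC,
              Finset.card_erase_of_mem hgC]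
            have h1' : 1 ≤ (G.compVerts W u).card :=
              Finset.card_pos.2 ⟨u, self_mem_compVerts u⟩
            omega
          · have hav : ∀ x ∈ G.ends g, ¬ G.reachIn (W.erase g) u x := by
              intro x hx hr
              exact hgC (mem_compEdges.2 ⟨hgW, x, hx,
                reach_mono (Finset.erase_subset _ _) hr⟩)
            rw [not_treeCompAt_iff, compVerts_erase_of_avoid hav, compEdges_erase_of_avoid hav]
            exact hnt


lemma treeCompAt_congr {X : Finset G.E} {v w : G.V} (h : G.reachIn X v w) :
    G.IsTreeCompAt X v ↔ G.IsTreeCompAt X w := by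
  unfold IsTreeCompAt
  rw [compVerts_eq_of_reach h, compEdges_eq_of_reach h]

lemma wt_eq_one {e : G.E} {u w : G.V} (h : G.ends e = s(u, w)) (hne : u ≠ w) :
    G.wt e u = 1 := by
  unfold wt
  rw [h, if_neg, if_pos (Sym2.mem_mk_left _ _)]
  intro hh
  rw [Sym2.eq_iff] at hh
  simp [Prod.ext_iff] at hh
  exact hne hh.symm

lemma degIn_eq_of_superset {Y K : Finset G.E} {w : G.V} (hYK : Y ⊆ K)
    (hall : ∀ k ∈ K, w ∈ G.ends k → k ∈ Y) : G.degIn Y w = G.degIn K w :=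
  Finset.sum_subset hYK (fun k hk hky => wt_eq_zero (fun hw => hky (hall k hk hw)))

lemma exists_edge_of_deg {Y : Finset G.E} {v : G.V} (h : 1 ≤ G.degIn Y v) :
    ∃ f ∈ Y, v ∈ G.ends f := by
  by_contra hc
  push_neg at hc
  have : G.degIn Y v = 0 := Finset.sum_eq_zero (fun f hf => wt_eq_zero (hc f hf))
  omega

/-- If `e` is a kernel bridge, the side of `u₁` after deletion is not a tree. -/
lemma not_tree_side_of_kernel {e : G.E} {u₁ u₂ : G.V} (he : G.ends e = s(u₁, u₂))
    (heK : e ∈ G.kernelSet) (hnc : ¬ G.reachIn (Finset.univ.erase e) u₁ u₂) :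
    ¬ G.IsTreeCompAt (Finset.univ.erase e) u₁ := by
  set X' := (Finset.univ : Finset G.E).erase e with hX'
  have hne : u₁ ≠ u₂ := by
    rintro rfl
    exact hnc (reach_refl _)
  have hu₁e : u₁ ∈ G.ends e := by rw [he]; exact Sym2.mem_mk_left _ _
  have hdegK : 2 ≤ G.degIn G.kernelSet u₁ := leafless_deg_two kernel_leafless heK hu₁e
  have hwt : G.wt e u₁ = 1 := wt_eq_one he hne
  have hdeg' : 1 ≤ G.degIn (G.kernelSet.erase e) u₁ := by
    have := degIn_erase G.kernelSet e heK u₁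
    omega
  set Y := (G.kernelSet.erase e) ∩ G.compEdges X' u₁ with hY
  -- u₁ has an incident edge in Y
  obtain ⟨f, hf, hu₁f⟩ := exists_edge_of_deg hdeg'
  have hfX' : f ∈ X' := by
    rw [hX']
    exact Finset.mem_erase.2 ⟨(Finset.mem_erase.1 hf).1, Finset.mem_univ _⟩
  have hfC : f ∈ G.compEdges X' u₁ := mem_compEdges.2 ⟨hfX', u₁, hu₁f, reach_refl _⟩
  have hfY : f ∈ Y := Finset.mem_inter.2 ⟨hf, hfC⟩
  have hsuppY : G.supp Y ⊆ G.compVerts X' u₁ := by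
    intro w hw
    obtain ⟨k, hk, hwk⟩ := mem_supp.1 hw
    exact mem_compVerts.2 (reach_of_mem_compEdges (Finset.mem_inter.1 hk).2 hwk)
  have hu₁Y : u₁ ∈ G.supp Y := mem_supp.2 ⟨f, hfY, hu₁f⟩
  -- every other vertex of supp Y has degree ≥ 2 in Y
  have hdeg2 : ∀ w ∈ G.supp Y, w ≠ u₁ → 2 ≤ G.degIn Y w := by
    intro w hw hwu
    have hwreach : G.reachIn X' u₁ w := mem_compVerts.1 (hsuppY hw)
    have hwu₂ : w ≠ u₂ := by
      rintro rfl
      exact hnc hwreach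
    have hwe : w ∉ G.ends e := by
      intro hwe
      rw [he, Sym2.mem_iff] at hwe
      rcases hwe with rfl | rfl
      · exact hwu rfl
      · exact hwu₂ rfl
    have heq : G.degIn Y w = G.degIn G.kernelSet w := by
      apply degIn_eq_of_superset
      · intro k hk
        exact Finset.mem_of_mem_erase (Finset.mem_inter.1 hk).1
      · intro k hk hwk
        have hke : k ≠ e := by
          rintro rfl
          exact hwe hwk
        refine Finset.mem_inter.2 ⟨Finset.mem_erase.2 ⟨hke, hk⟩, ?_⟩
        refine mem_compEdges.2 ⟨Finset.mem_erase.2 ⟨hke, Finset.mem_univ _⟩, w, hwk, hwreach⟩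
    obtain ⟨k, hkY, hwk⟩ := mem_supp.1 hw
    have hkK : k ∈ G.kernelSet := Finset.mem_of_mem_erase (Finset.mem_inter.1 hkY).1
    rw [heq]
    exact leafless_deg_two kernel_leafless hkK hwk
  have hcards : (G.supp Y).card ≤ Y.card := card_supp_le_card hu₁Y hdeg2
  have hYsub : Y ⊆ G.compEdges X' u₁ := Finset.inter_subset_right
  have hgrow := grow X' u₁ ((G.compVerts X' u₁) \ G.supp Y).card (G.supp Y) Y le_rfl
    ⟨u₁, hu₁Y⟩ hsuppY hYsub (fun k hk w hw => mem_supp.2 ⟨k, hk, hw⟩)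
  rw [not_treeCompAt_iff]
  omega

/-- Increase lemma: a tree component of `X∖e` containing an endpoint of `e`,
while the original component of `e` is not a tree, forces an increase. -/
lemma treeCount_lt_of_new_tree {e : G.E} {u₁ u₂ : G.V} (he : G.ends e = s(u₁, u₂))
    (h1 : ¬ G.IsTreeCompAt Finset.univ u₁) (h2 : ¬ G.IsTreeCompAt Finset.univ u₂)
    {w : G.V} (hw : G.IsTreeCompAt (Finset.univ.erase e) w)
    (hwu : G.reachIn (Finset.univ.erase e) w u₁ ∨ G.reachIn (Finset.univ.erase e) w u₂) :
    G.treeCount Finset.univ < G.treeCount (Finset.univ.erase e) := by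
  set X' := (Finset.univ : Finset G.E).erase e with hX'
  unfold treeCount
  apply Finset.card_lt_card
  constructor
  · -- old tree components survive
    intro S hS
    obtain ⟨v, hv, rfl⟩ := Finset.mem_image.1 hS
    have hvt : G.IsTreeCompAt Finset.univ v := (Finset.mem_filter.1 hv).2
    have hvu : ∀ u ∈ G.ends e, ¬ G.reachIn X' v u := by
      intro u hu hr
      have hru : G.reachIn Finset.univ v u := reach_mono (Finset.erase_subset _ _) hr
      have := (treeCompAt_congr hru).1 hvt
      rw [he, Sym2.mem_iff] at hu
      rcases hu with rfl | rfl
      · exact h1 this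
      · exact h2 this
    have hV := compVerts_erase_of_avoid hvu
    have hE := compEdges_erase_of_avoid hvu
    refine Finset.mem_image.2 ⟨v, Finset.mem_filter.2 ⟨Finset.mem_univ _, ?_⟩, hV⟩
    unfold IsTreeCompAt at hvt ⊢
    rw [hV, hE]
    exact hvt
  · -- but the new tree is new
    intro hsub
    have hT : G.compVerts X' w ∈
        ((Finset.univ.filter (fun v => G.IsTreeCompAt X' v)).image (fun v => G.compVerts X' v)) :=
      Finset.mem_image.2 ⟨w, Finset.mem_filter.2 ⟨Finset.mem_univ _, hw⟩, rfl⟩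
    have := hsub hT
    obtain ⟨v, hv, hveq⟩ := Finset.mem_image.1 this
    have hvt : G.IsTreeCompAt Finset.univ v := (Finset.mem_filter.1 hv).2
    have hui : ∃ u, (u = u₁ ∨ u = u₂) ∧ u ∈ G.compVerts X' w := by
      rcases hwu with h | h
      · exact ⟨u₁, Or.inl rfl, mem_compVerts.2 h⟩
      · exact ⟨u₂, Or.inr rfl, mem_compVerts.2 h⟩
    obtain ⟨u, huor, huw⟩ := hui
    rw [← hveq] at huw
    have hru : G.reachIn Finset.univ v u := mem_compVerts.1 huw
    have := (treeCompAt_congr hru).1 hvt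
    rcases huor with rfl | rfl
    · exact h1 this
    · exact h2 this


/-- If `S ∈ image` and `u ∈ S`, then `S = compVerts X u` and `u` is a tree vertex. -/
lemma tree_image_eq {X : Finset G.E} {S : Finset G.V} {u : G.V}
    (hS : S ∈ ((Finset.univ.filter (fun v => G.IsTreeCompAt X v)).image
      (fun v => G.compVerts X v))) (hu : u ∈ S) :
    S = G.compVerts X u ∧ G.IsTreeCompAt X u := by
  obtain ⟨v, hv, rfl⟩ := Finset.mem_image.1 hS
  have hr : G.reachIn X v u := mem_compVerts.1 hu
  exact ⟨compVerts_eq_of_reach hr, (treeCompAt_congr hr).1 (Finset.mem_filter.1 hv).2⟩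

/-- Deleting an edge of a tree component increases the tree count. -/
lemma treeCount_lt_of_tree {e : G.E} {u₁ u₂ : G.V} (he : G.ends e = s(u₁, u₂))
    (h1 : G.IsTreeCompAt Finset.univ u₁) :
    G.treeCount Finset.univ < G.treeCount (Finset.univ.erase e) := by
  classical
  set X' := (Finset.univ : Finset G.E).erase e with hX'
  have heu : e ∈ (Finset.univ : Finset G.E) := Finset.mem_univ _
  have hu₁e : u₁ ∈ G.ends e := by rw [he]; exact Sym2.mem_mk_left _ _
  have hu₂e : u₂ ∈ G.ends e := by rw [he]; exact Sym2.mem_mk_right _ _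
  have heC : e ∈ G.compEdges Finset.univ u₁ :=
    mem_compEdges.2 ⟨heu, u₁, hu₁e, reach_refl _⟩
  have h12 : G.reachIn Finset.univ u₁ u₂ := Relation.ReflTransGen.single ⟨e, heu, he⟩
  -- `e` is a bridge
  have hnc : ¬ G.reachIn X' u₁ u₂ := by
    intro hc
    have hV := compVerts_erase_of_conn he hc
    have hE := compEdges_erase_of_conn he hc
    have hgrow := card_compVerts_le X' u₁
    rw [hV, hE, Finset.card_erase_of_mem heC] at hgrow
    unfold IsTreeCompAt at h1
    have hpos : 1 ≤ (G.compEdges Finset.univ u₁).card := Finset.card_pos.2 ⟨e, heC⟩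
    omega
  obtain ⟨hVu, hVd, hEu, hEd, heU⟩ := bridge_partition he heu hnc
  rw [← hX'] at hVu hVd hEu hEd heU
  have hcV : (G.compVerts Finset.univ u₁).card =
      (G.compVerts X' u₁).card + (G.compVerts X' u₂).card := by
    rw [hVu, Finset.card_union_of_disjoint hVd]
  have hcE : (G.compEdges Finset.univ u₁).card =
      1 + ((G.compEdges X' u₁).card + (G.compEdges X' u₂).card) := by
    rw [hEu, Finset.card_insert_of_notMem heU, Finset.card_union_of_disjoint hEd]
    omega
  have hg1 := card_compVerts_le X' u₁
  have hg2 := card_compVerts_le X' u₂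
  unfold IsTreeCompAt at h1
  have ht1 : G.IsTreeCompAt X' u₁ := by unfold IsTreeCompAt; omega
  have ht2 : G.IsTreeCompAt X' u₂ := by unfold IsTreeCompAt; omega
  -- now count
  unfold treeCount
  set M := ((Finset.univ.filter (fun v => G.IsTreeCompAt Finset.univ v)).image
      (fun v => G.compVerts Finset.univ v)) with hM
  set M' := ((Finset.univ.filter (fun v => G.IsTreeCompAt X' v)).image
      (fun v => G.compVerts X' v)) with hM'
  have hA2 : G.compVerts X' u₂ ∈ M' :=
    Finset.mem_image.2 ⟨u₂, Finset.mem_filter.2 ⟨Finset.mem_univ _, ht2⟩, rfl⟩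
  set φ : Finset G.V → Finset G.V := fun S => if u₁ ∈ S then G.compVerts X' u₁ else S with hφ
  have hmaps : ∀ S ∈ M, φ S ∈ M'.erase (G.compVerts X' u₂) := by
    intro S hS
    by_cases hu : u₁ ∈ S
    · have : φ S = G.compVerts X' u₁ := by rw [hφ]; simp [hu]
      rw [this]
      refine Finset.mem_erase.2 ⟨?_, Finset.mem_image.2
        ⟨u₁, Finset.mem_filter.2 ⟨Finset.mem_univ _, ht1⟩, rfl⟩⟩
      intro hEq
      have : u₁ ∈ G.compVerts X' u₂ := hEq ▸ self_mem_compVerts u₁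
      exact hnc (reach_symm (mem_compVerts.1 this))
    · have hφS : φ S = S := by rw [hφ]; simp [hu]
      rw [hφS]
      have hu2 : u₂ ∉ S := by
        intro hu2
        obtain ⟨hSeq, _⟩ := tree_image_eq hS hu2
        exact hu (hSeq ▸ mem_compVerts.2 (reach_symm h12))
      obtain ⟨v, hv, rfl⟩ := Finset.mem_image.1 hS
      have hvt : G.IsTreeCompAt Finset.univ v := (Finset.mem_filter.1 hv).2
      have hav : ∀ x ∈ G.ends e, ¬ G.reachIn X' v x := by
        intro x hx hr
        rw [he, Sym2.mem_iff] at hx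
        have : x ∈ G.compVerts Finset.univ v :=
          mem_compVerts.2 (reach_mono (Finset.erase_subset _ _) hr)
        rcases hx with rfl | rfl
        · exact hu this
        · exact hu2 this
      have hV := compVerts_erase_of_avoid hav
      have hE := compEdges_erase_of_avoid hav
      refine Finset.mem_erase.2 ⟨?_, Finset.mem_image.2 ⟨v, Finset.mem_filter.2
        ⟨Finset.mem_univ _, ?_⟩, hV⟩⟩
      · intro hEq
        exact hu2 (hEq.symm ▸ self_mem_compVerts u₂)
      · unfold IsTreeCompAt at hvt ⊢
        rw [hV, hE]
        exact hvt
  have hinj : Set.InjOn φ M := by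
    intro S hSm S' hSm' hEq
    by_cases hu : u₁ ∈ S <;> by_cases hu' : u₁ ∈ S'
    · obtain ⟨h1e, _⟩ := tree_image_eq hSm hu
      obtain ⟨h2e, _⟩ := tree_image_eq hSm' hu'
      rw [h1e, h2e]
    · exfalso
      have : φ S = G.compVerts X' u₁ := by rw [hφ]; simp [hu]
      have h2 : φ S' = S' := by rw [hφ]; simp [hu']
      rw [this, h2] at hEq
      exact hu' (hEq ▸ self_mem_compVerts u₁)
    · exfalso
      have h2 : φ S' = G.compVerts X' u₁ := by rw [hφ]; simp [hu']
      have : φ S = S := by rw [hφ]; simp [hu]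
      rw [this, h2] at hEq
      exact hu (hEq.symm ▸ self_mem_compVerts u₁)
    · have : φ S = S := by rw [hφ]; simp [hu]
      have h2 : φ S' = S' := by rw [hφ]; simp [hu']
      rw [this, h2] at hEq
      exact hEq
  calc M.card = (M.image φ).card := (Finset.card_image_of_injOn hinj).symm
    _ ≤ (M'.erase (G.compVerts X' u₂)).card := Finset.card_le_card (by
        intro S hS
        obtain ⟨T, hT, rfl⟩ := Finset.mem_image.1 hS
        exact hmaps T hT)
    _ < M'.card := by
        rw [Finset.card_erase_of_mem hA2]
        have := Finset.card_pos.2 ⟨_, hA2⟩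
        omega


lemma treeCount_le_of_core {e : G.E} (hcore : e ∈ G.coreSet) :
    G.treeCount (Finset.univ.erase e) ≤ G.treeCount Finset.univ := by
  obtain ⟨heK, hδ⟩ := Finset.mem_filter.1 hcore
  obtain ⟨u₁, u₂, he⟩ := sym2_rep (G.ends e)
  set X' := (Finset.univ : Finset G.E).erase e with hX'
  have hu₁e : u₁ ∈ G.ends e := by rw [he]; exact Sym2.mem_mk_left _ _
  have hu₂e : u₂ ∈ G.ends e := by rw [he]; exact Sym2.mem_mk_right _ _
  have he₂ : G.ends e = s(u₂, u₁) := he.trans Sym2.eq_swap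
  have hδ1 : (G.compVerts Finset.univ u₁).card + 1 ≤ (G.compEdges Finset.univ u₁).card := by
    have := hδ u₁ hu₁e
    unfold compDelta at this
    omega
  have hδ2 : (G.compVerts Finset.univ u₂).card + 1 ≤ (G.compEdges Finset.univ u₂).card := by
    have := hδ u₂ hu₂e
    unfold compDelta at this
    omega
  have heC1 : e ∈ G.compEdges Finset.univ u₁ :=
    mem_compEdges.2 ⟨Finset.mem_univ _, u₁, hu₁e, reach_refl _⟩
  have heC2 : e ∈ G.compEdges Finset.univ u₂ :=
    mem_compEdges.2 ⟨Finset.mem_univ _, u₂, hu₂e, reach_refl _⟩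
  -- neither endpoint lies in a tree component of `X'`
  have hnt1 : ¬ G.IsTreeCompAt X' u₁ := by
    by_cases hc : G.reachIn X' u₁ u₂
    · have hV := compVerts_erase_of_conn he hc
      have hE := compEdges_erase_of_conn he hc
      rw [← hX'] at hV hE
      unfold IsTreeCompAt
      rw [hV, hE, Finset.card_erase_of_mem heC1]
      have hpos : 1 ≤ (G.compEdges Finset.univ u₁).card := Finset.card_pos.2 ⟨e, heC1⟩
      omega
    · exact not_tree_side_of_kernel he heK hc
  have hnt2 : ¬ G.IsTreeCompAt X' u₂ := by
    by_cases hc : G.reachIn X' u₂ u₁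
    · have hV := compVerts_erase_of_conn he₂ hc
      have hE := compEdges_erase_of_conn he₂ hc
      rw [← hX'] at hV hE
      unfold IsTreeCompAt
      rw [hV, hE, Finset.card_erase_of_mem heC2]
      have hpos : 1 ≤ (G.compEdges Finset.univ u₂).card := Finset.card_pos.2 ⟨e, heC2⟩
      omega
    · exact not_tree_side_of_kernel he₂ heK hc
  -- tree components of `X'` are tree components of `univ`
  unfold treeCount
  apply Finset.card_le_card
  intro S hS
  obtain ⟨v, hv, rfl⟩ := Finset.mem_image.1 hS
  have hvt : G.IsTreeCompAt X' v := (Finset.mem_filter.1 hv).2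
  have hav : ∀ u ∈ G.ends e, ¬ G.reachIn X' v u := by
    intro u hu hr
    have := (treeCompAt_congr hr).1 hvt
    rw [he, Sym2.mem_iff] at hu
    rcases hu with rfl | rfl
    · exact hnt1 this
    · exact hnt2 this
  have hV := compVerts_erase_of_avoid hav
  have hE := compEdges_erase_of_avoid hav
  rw [← hX'] at hV hE
  refine Finset.mem_image.2 ⟨v, Finset.mem_filter.2 ⟨Finset.mem_univ _, ?_⟩, hV.symm⟩
  unfold IsTreeCompAt at hvt ⊢
  rw [← hV, ← hE]
  exact hvt


lemma treeCount_lt_of_not_core {e : G.E} (hcore : e ∉ G.coreSet) :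
    G.treeCount Finset.univ < G.treeCount (Finset.univ.erase e) := by
  obtain ⟨u₁, u₂, he⟩ := sym2_rep (G.ends e)
  set X' := (Finset.univ : Finset G.E).erase e with hX'
  have hu₁e : u₁ ∈ G.ends e := by rw [he]; exact Sym2.mem_mk_left _ _
  have hu₂e : u₂ ∈ G.ends e := by rw [he]; exact Sym2.mem_mk_right _ _
  have h12 : G.reachIn Finset.univ u₁ u₂ :=
    Relation.ReflTransGen.single ⟨e, Finset.mem_univ _, he⟩
  by_cases ht1 : G.IsTreeCompAt Finset.univ u₁
  · exact treeCount_lt_of_tree he ht1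
  have ht2 : ¬ G.IsTreeCompAt Finset.univ u₂ := fun h => ht1 ((treeCompAt_congr h12).2 h)
  by_cases hex : ∃ w, G.IsTreeCompAt X' w ∧
      (G.reachIn X' w u₁ ∨ G.reachIn X' w u₂)
  · obtain ⟨w, hw, hwu⟩ := hex
    exact treeCount_lt_of_new_tree he ht1 ht2 hw hwu
  · exfalso
    apply hcore
    push_neg at hex
    have hnt1 : ¬ G.IsTreeCompAt X' u₁ := fun h =>
      (hex u₁ h).1 (reach_refl _)
    have hnt2 : ¬ G.IsTreeCompAt X' u₂ := fun h =>
      (hex u₂ h).2 (reach_refl _)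
    have hends : ∀ u ∈ G.ends e, ¬ G.IsTreeCompAt (Finset.univ.erase e) u := by
      intro u hu
      rw [he, Sym2.mem_iff] at hu
      rcases hu with rfl | rfl
      · exact hnt1
      · exact hnt2
    have hK : e ∈ G.kernelSet := by
      obtain ⟨Y, heY, hY⟩ := exists_leafless (Fintype.card G.E) Finset.univ
        (by rw [Finset.card_univ]) e (Finset.mem_univ _) hends
      exact leafless_subset_kernel hY heY
    have heC1 : e ∈ G.compEdges Finset.univ u₁ :=
      mem_compEdges.2 ⟨Finset.mem_univ _, u₁, hu₁e, reach_refl _⟩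
    have hnA : (G.compVerts Finset.univ u₁).card ≤ (G.compEdges Finset.univ u₁).card :=
      not_treeCompAt_iff.1 ht1
    have hstrict : (G.compVerts Finset.univ u₁).card + 1 ≤ (G.compEdges Finset.univ u₁).card := by
      rcases Nat.lt_or_ge (G.compVerts Finset.univ u₁).card
        (G.compEdges Finset.univ u₁).card with h | h
      · omega
      · exfalso
        have hFA : (G.compEdges Finset.univ u₁).card = (G.compVerts Finset.univ u₁).card := by
          omega
        by_cases hc : G.reachIn X' u₁ u₂
        · apply hnt1
          have hV := compVerts_erase_of_conn he hc
          have hE := compEdges_erase_of_conn he hc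
          rw [← hX'] at hV hE
          unfold IsTreeCompAt
          rw [hV, hE, Finset.card_erase_of_mem heC1]
          have hpos : 1 ≤ (G.compEdges Finset.univ u₁).card := Finset.card_pos.2 ⟨e, heC1⟩
          omega
        · obtain ⟨hVu, hVd, hEu, hEd, heU⟩ := bridge_partition he (Finset.mem_univ _) hc
          rw [← hX'] at hVu hVd hEu hEd heU
          have hcV : (G.compVerts Finset.univ u₁).card =
              (G.compVerts X' u₁).card + (G.compVerts X' u₂).card := by
            rw [hVu, Finset.card_union_of_disjoint hVd]
          have hcE : (G.compEdges Finset.univ u₁).card =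
              1 + ((G.compEdges X' u₁).card + (G.compEdges X' u₂).card) := by
            rw [hEu, Finset.card_insert_of_notMem heU,
              Finset.card_union_of_disjoint hEd]
            omega
          have hb1 : (G.compVerts X' u₁).card ≤ (G.compEdges X' u₁).card :=
            not_treeCompAt_iff.1 hnt1
          have hb2 : (G.compVerts X' u₂).card ≤ (G.compEdges X' u₂).card :=
            not_treeCompAt_iff.1 hnt2
          omega
    have hδ1 : (1 : ℤ) ≤ G.compDelta u₁ := by
      unfold compDelta
      omega
    refine Finset.mem_filter.2 ⟨hK, fun v hv => ?_⟩
    rw [he, Sym2.mem_iff] at hv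
    rcases hv with rfl | rfl
    · exact hδ1
    · unfold compDelta
      rw [← compVerts_eq_of_reach h12, ← compEdges_eq_of_reach h12]
      unfold compDelta at hδ1
      omega

end Multigraph

/-- For a graph with a component having at least two cycles, an edge belongs to
the core `[G]` iff deleting it does not increase the number of tree
components. -/
theorem stmt_14 (G : Multigraph) (hni : G.NoIso)
    (h2 : ∃ v : G.V, 1 ≤ G.compDelta v) :
    ∀ e : G.E, e ∈ G.coreSet ↔
      ¬ (G.treeCount Finset.univ < G.treeCount (Finset.univ.erase e)) := by
  intro e
  constructor
  · intro hcore
    have := Multigraph.treeCount_le_of_core hcore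
    omega
  · intro h
    by_contra hcore
    exact h (Multigraph.treeCount_lt_of_not_core hcore)
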